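/- Fix 1 < α < 2, let q₀(t) = log(e/t), ρ(s) = (1 + ((2−α)/(α−1)) ∫_s^1 dt/(t^{1/(α−1)} q₀(t)^{1/(α−1)}))^{(α−1)/(α−2)} for s ∈ (0,1], and f(z) = (z/|z|)·ρ(|z|) for z ∈ 𝔻\{0}, f(0) = 0. Then for every z ∈ 𝔻\{0}, the inner dilatation of order α satisfies K_{I,α}(z,f) = q₀(|z|) = log(e/|z|). -/

import Mathlib

/-!
STATEMENT 14: For `1 < α < 2` and the radial mapping `f(z) = (z/|z|)ρ(|z|)`, `f(0)=0`,
for every `z ∈ 𝔻 \ {0}` the inner dilatation of order `α` satisfies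
`K_{I,α}(z,f) = q₀(|z|) = log(e/|z|)`.
-/

open MeasureTheory Set ENNReal

noncomputable section

/-- The kernel `t ↦ 1/(t^{1/(α-1)} (log(e/t))^{1/(α-1)})`. -/
def kern (α : ℝ) (t : ℝ) : ℝ :=
  1 / (t ^ (1 / (α - 1)) * (Real.log (Real.exp 1 / t)) ^ (1 / (α - 1)))

/-- The radial profile `ρ`. -/
def rho (α : ℝ) (s : ℝ) : ℝ :=
  (1 + ((2 - α) / (α - 1)) * ∫ t in s..1, kern α t) ^ ((α - 1) / (α - 2))

/-- The radial mapping `f(z) = (z/|z|)·ρ(|z|)`, `f(0) = 0`. -/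
def fmap (α : ℝ) (z : ℂ) : ℂ :=
  if z = 0 then 0 else (z / (‖z‖ : ℂ)) * (rho α ‖z‖ : ℂ)

/-- `f_z = (f_x - i f_y)/2`. -/
def wirtP (f : ℂ → ℂ) (z : ℂ) : ℂ :=
  (fderiv ℝ f z 1 - Complex.I * fderiv ℝ f z Complex.I) / 2

/-- `f_z̄ = (f_x + i f_y)/2`. -/
def wirtM (f : ℂ → ℂ) (z : ℂ) : ℂ :=
  (fderiv ℝ f z 1 + Complex.I * fderiv ℝ f z Complex.I) / 2

/-- Jacobian `J(z,f) = |f_z|² - |f_z̄|²`. -/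
def jacF (f : ℂ → ℂ) (z : ℂ) : ℝ :=
  ‖wirtP f z‖ ^ 2 - ‖wirtM f z‖ ^ 2

open Classical in
/-- The inner dilatation of order `p`. -/
def innerDil (p : ℝ) (f : ℂ → ℂ) (z : ℂ) : ℝ≥0∞ :=
  if jacF f z ≠ 0 then
    ENNReal.ofReal ((‖wirtP f z‖ ^ 2 - ‖wirtM f z‖ ^ 2) /
      (‖wirtP f z‖ - ‖wirtM f z‖) ^ p)
  else if DifferentiableAt ℝ f z ∧ fderiv ℝ f z = 0 then 1 else ⊤

section aux
variable {α : ℝ} (hα₁ : 1 < α) (hα₂ : α < 2)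

lemma logq_ge_one {t : ℝ} (h0 : 0 < t) (h1 : t ≤ 1) : 1 ≤ Real.log (Real.exp 1 / t) := by
  rw [Real.log_div (Real.exp_pos 1).ne' h0.ne', Real.log_exp]
  nlinarith [Real.log_nonpos h0.le h1]

lemma logq_pos {t : ℝ} (h0 : 0 < t) (h1 : t < Real.exp 1) : 0 < Real.log (Real.exp 1 / t) :=
  Real.log_pos ((one_lt_div h0).2 h1)

include hα₁ in
lemma kern_pos {t : ℝ} (h0 : 0 < t) (h1 : t < Real.exp 1) : 0 < kern α t := by
  have := logq_pos h0 h1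
  have h2 : (0:ℝ) < t ^ (1 / (α - 1)) := Real.rpow_pos_of_pos h0 _
  have h3 : (0:ℝ) < (Real.log (Real.exp 1 / t)) ^ (1 / (α - 1)) := Real.rpow_pos_of_pos this _
  exact div_pos one_pos (mul_pos h2 h3)

include hα₁ in
lemma kern_continuousAt {t : ℝ} (h0 : 0 < t) (h1 : t < Real.exp 1) :
    ContinuousAt (kern α) t := by
  have ha : (0:ℝ) < α - 1 := by linarith
  have hγ : (0:ℝ) ≤ 1 / (α - 1) := by positivity
  have hlog : ContinuousAt (fun u : ℝ => Real.log (Real.exp 1 / u)) t := by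
    exact (Real.continuousAt_log (div_pos (Real.exp_pos 1) h0).ne').comp
      (continuousAt_const.div continuousAt_id h0.ne')
  have hden : ContinuousAt (fun u : ℝ => u ^ (1 / (α - 1)) *
      (Real.log (Real.exp 1 / u)) ^ (1 / (α - 1))) t := by
    exact (Real.continuousAt_rpow_const t _ (Or.inr hγ)).mul
      ((Real.continuousAt_rpow_const _ _ (Or.inr hγ)).comp hlog)
  have hne : t ^ (1 / (α - 1)) * (Real.log (Real.exp 1 / t)) ^ (1 / (α - 1)) ≠ 0 := by
    have := logq_pos h0 h1
    positivity
  exact continuousAt_const.div hden hne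

include hα₁ in
lemma kern_contOn : ContinuousOn (kern α) (Ioo 0 (Real.exp 1)) := fun t ht =>
  (kern_continuousAt hα₁ ht.1 ht.2).continuousWithinAt

include hα₁ in
lemma kern_intble {s : ℝ} (h0 : 0 < s) (h1 : s ≤ 1) :
    IntervalIntegrable (kern α) volume s 1 := by
  apply (kern_contOn hα₁).mono _ |>.intervalIntegrable
  intro t ht
  rw [uIcc_of_le h1] at ht
  exact ⟨lt_of_lt_of_le h0 ht.1, lt_of_le_of_lt ht.2 (by nlinarith [Real.exp_one_gt_d9])⟩

include hα₁ in
lemma intA_hasDerivAt {s : ℝ} (h0 : 0 < s) (h1 : s ≤ 1) :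
    HasDerivAt (fun u => ∫ t in u..1, kern α t) (-(kern α s)) s := by
  have hse : s < Real.exp 1 := lt_of_le_of_lt h1 (by nlinarith [Real.exp_one_gt_d9])
  exact intervalIntegral.integral_hasDerivAt_left (kern_intble hα₁ h0 h1)
    ((kern_contOn hα₁).stronglyMeasurableAtFilter isOpen_Ioo s ⟨h0, hse⟩)
    (kern_continuousAt hα₁ h0 hse)

include hα₁ hα₂ in
lemma A_pos {s : ℝ} (h0 : 0 < s) (h1 : s ≤ 1) :
    1 ≤ 1 + ((2 - α) / (α - 1)) * ∫ t in s..1, kern α t := by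
  have hc : 0 < (2 - α) / (α - 1) := by apply div_pos <;> linarith
  have hI : 0 ≤ ∫ t in s..1, kern α t := by
    apply intervalIntegral.integral_nonneg h1
    intro u hu
    exact (kern_pos hα₁ (lt_of_lt_of_le h0 hu.1)
      (lt_of_le_of_lt hu.2 (by nlinarith [Real.exp_one_gt_d9]))).le
  nlinarith

include hα₁ hα₂ in
lemma rho_hasDerivAt {s : ℝ} (h0 : 0 < s) (h1 : s ≤ 1) :
    HasDerivAt (rho α)
      ((1 + ((2 - α) / (α - 1)) * ∫ t in s..1, kern α t) ^ ((1:ℝ) / (α - 2)) * kern α s) s := by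
  set c := (2 - α) / (α - 1) with hc
  set p := (α - 1) / (α - 2) with hp
  have hA : HasDerivAt (fun u => 1 + c * ∫ t in u..1, kern α t) (c * (-(kern α s))) s :=
    ((intA_hasDerivAt hα₁ h0 h1).const_mul c).const_add 1
  have hApos : (0:ℝ) < 1 + c * ∫ t in s..1, kern α t := lt_of_lt_of_le one_pos (A_pos hα₁ hα₂ h0 h1)
  have hpow : HasDerivAt (fun x : ℝ => x ^ p) (p * (1 + c * ∫ t in s..1, kern α t) ^ (p - 1))
      (1 + c * ∫ t in s..1, kern α t) := Real.hasDerivAt_rpow_const (Or.inl hApos.ne')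
  have := hpow.comp s hA
  refine this.congr_deriv (Eq.symm ?_)
  have e1 : α - 1 ≠ 0 := by linarith
  have e2 : α - 2 ≠ 0 := by linarith
  have h1' : p * c = -1 := by
    rw [hp, hc]; field_simp; ring
  have h2' : p - 1 = 1 / (α - 2) := by
    rw [hp]; field_simp; ring
  rw [h2']
  clear_value p c
  set X := (1 + c * ∫ t in s..1, kern α t) ^ ((1:ℝ) / (α - 2)) with hX
  clear_value X
  linear_combination (X * kern α s) * h1'

include hα₁ hα₂ in
lemma key_ineq {s : ℝ} (h0 : 0 < s) (h1 : s ≤ 1) :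
    s * kern α s ≤ 1 + ((2 - α) / (α - 1)) * ∫ t in s..1, kern α t := by
  have ha : (0:ℝ) < α - 1 := by linarith
  set γ : ℝ := 1 / (α - 1) with hγdef
  have hγ1 : 1 < γ := by
    rw [hγdef, lt_div_iff₀ ha]; linarith
  have hγ0 : (0:ℝ) < γ := by linarith
  set q : ℝ := Real.log (Real.exp 1 / s) with hq
  have hq1 : 1 ≤ q := logq_ge_one h0 h1
  have hq0 : 0 < q := by linarith
  set g : ℝ → ℝ := fun t => q ^ (-γ) * t ^ (-γ) with hg
  have hpt : ∀ t ∈ Icc s 1, g t ≤ kern α t := by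
    intro t ht
    have ht0 : 0 < t := lt_of_lt_of_le h0 ht.1
    have hL1 : 1 ≤ Real.log (Real.exp 1 / t) := logq_ge_one ht0 ht.2
    have hLq : Real.log (Real.exp 1 / t) ≤ q := by
      rw [hq]
      have hdiv : Real.exp 1 / t ≤ Real.exp 1 / s := by
        apply div_le_div_of_nonneg_left (Real.exp_pos 1).le h0 ht.1
      exact Real.log_le_log (by positivity) hdiv
    have h2 : Real.log (Real.exp 1 / t) ^ γ ≤ q ^ γ :=
      Real.rpow_le_rpow (by linarith) hLq hγ0.le
    have h3 : (0:ℝ) < t ^ γ := Real.rpow_pos_of_pos ht0 _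
    have h4 : (0:ℝ) < Real.log (Real.exp 1 / t) ^ γ := Real.rpow_pos_of_pos (by linarith) _
    have h5 : g t = 1 / (t ^ γ * q ^ γ) := by
      rw [hg]
      simp only []
      rw [Real.rpow_neg hq0.le, Real.rpow_neg ht0.le]
      field_simp
    rw [h5, kern, ← hγdef]
    exact one_div_le_one_div_of_le (by positivity) (mul_le_mul_of_nonneg_left h2 h3.le)
  have hgint : IntervalIntegrable g volume s 1 := by
    apply IntervalIntegrable.const_mul
    apply ContinuousOn.intervalIntegrable
    intro t ht
    rw [uIcc_of_le h1] at ht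
    exact (Real.continuousAt_rpow_const t (-γ)
      (Or.inl (lt_of_lt_of_le h0 ht.1).ne')).continuousWithinAt
  have hgval : ∫ t in s..1, g t = q ^ (-γ) * ((1 - s ^ (-γ + 1)) / (-γ + 1)) := by
    rw [hg, intervalIntegral.integral_const_mul]
    rw [integral_rpow (Or.inr ⟨by
        intro h
        have : γ = 1 := by linarith [neg_injective h]
        linarith,
      by
        rw [uIcc_of_le h1]
        intro hmem
        rw [Set.mem_Icc] at hmem
        linarith [hmem.1]⟩)]
    rw [Real.one_rpow]
  have hcomp : ∫ t in s..1, g t ≤ ∫ t in s..1, kern α t :=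
    intervalIntegral.integral_mono_on h1 hgint (kern_intble hα₁ h0 h1) hpt
  have hc : (2 - α) / (α - 1) = γ - 1 := by
    rw [hγdef]; field_simp; ring
  have hsk : s * kern α s = q ^ (-γ) * s ^ (-γ + 1) := by
    have h1s : s ^ (-γ + 1) = (s ^ γ)⁻¹ * s := by
      rw [Real.rpow_add h0, Real.rpow_one, Real.rpow_neg h0.le]
    rw [kern, ← hγdef, ← hq, h1s, Real.rpow_neg hq0.le]
    have hs : (0:ℝ) < s ^ γ := Real.rpow_pos_of_pos h0 _
    have hqq : (0:ℝ) < q ^ γ := Real.rpow_pos_of_pos hq0 _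
    rw [one_div, mul_inv]
    ring
  have hql : q ^ (-γ) ≤ 1 := Real.rpow_le_one_of_one_le_of_nonpos hq1 (by linarith)
  rw [hc]
  have h6 : (γ - 1) * (∫ t in s..1, g t) ≤ (γ - 1) * ∫ t in s..1, kern α t :=
    mul_le_mul_of_nonneg_left hcomp (by linarith)
  rw [hgval] at h6
  have h7 : (γ - 1) * (q ^ (-γ) * ((1 - s ^ (-γ + 1)) / (-γ + 1))) =
      q ^ (-γ) * s ^ (-γ + 1) - q ^ (-γ) := by
    have hne : -γ + 1 ≠ 0 := by linarith
    field_simp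
    ring
  linarith [h6, h7, hsk, hql]
end aux


lemma radial_fderiv (h : ℝ → ℝ) (d : ℝ) (z : ℂ) (hz0 : z ≠ 0)
    (hd : HasDerivAt h d ‖z‖) :
    DifferentiableAt ℝ (fun w : ℂ => w * (h ‖w‖ : ℂ)) z ∧
    fderiv ℝ (fun w : ℂ => w * (h ‖w‖ : ℂ)) z 1 = (h ‖z‖ : ℂ) + z * d * (z.re / ‖z‖) ∧
    fderiv ℝ (fun w : ℂ => w * (h ‖w‖ : ℂ)) z Complex.I
      = Complex.I * (h ‖z‖ : ℂ) + z * d * (z.im / ‖z‖) := by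
  have hzn : (0:ℝ) < ‖z‖ := norm_pos_iff.2 hz0
  -- derivative of normSq
  have hre := Complex.reCLM.hasFDerivAt (x := z)
  have him := Complex.imCLM.hasFDerivAt (x := z)
  have nsq : HasFDerivAt (fun w : ℂ => Complex.normSq w)
      ((z.re • Complex.reCLM + z.re • Complex.reCLM) +
        (z.im • Complex.imCLM + z.im • Complex.imCLM)) z := by
    have : (fun w : ℂ => Complex.normSq w) = fun w : ℂ => w.re * w.re + w.im * w.im := by
      funext w; exact Complex.normSq_apply w
    rw [this]
    exact (hre.mul hre).add (him.mul him)
  -- derivative of norm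
  have hnsq_ne : Complex.normSq z ≠ 0 := (Complex.normSq_pos.2 hz0).ne'
  have hsq : HasDerivAt Real.sqrt (1 / (2 * ‖z‖)) (Complex.normSq z) := by
    have := Real.hasDerivAt_sqrt hnsq_ne
    have e : Real.sqrt (Complex.normSq z) = ‖z‖ := by
      rw [Complex.norm_def]
    rwa [e] at this
  have hnorm : HasFDerivAt (fun w : ℂ => ‖w‖)
      ((1 / (2 * ‖z‖)) • ((z.re • Complex.reCLM + z.re • Complex.reCLM) +
        (z.im • Complex.imCLM + z.im • Complex.imCLM))) z := by
    have := hsq.comp_hasFDerivAt z nsq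
    have e : (Real.sqrt ∘ fun w : ℂ => Complex.normSq w) = fun w : ℂ => ‖w‖ := by
      funext w
      simp [Function.comp, Complex.norm_def]
    rwa [e] at this
  have hh : HasFDerivAt (fun w : ℂ => (h ‖w‖ : ℂ))
      (Complex.ofRealCLM.comp (d • ((1 / (2 * ‖z‖)) • ((z.re • Complex.reCLM + z.re • Complex.reCLM) +
        (z.im • Complex.imCLM + z.im • Complex.imCLM))))) z :=
    Complex.ofRealCLM.hasFDerivAt.comp z (hd.comp_hasFDerivAt z hnorm)
  have hprod := (hasFDerivAt_id z).mul hh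
  simp only [id_eq] at hprod
  refine ⟨hprod.differentiableAt, ?_, ?_⟩ <;>
  · rw [show (fun w : ℂ => w * (h ‖w‖ : ℂ)) = (id * fun w : ℂ => (h ‖w‖ : ℂ)) from rfl, hprod.fderiv]
    simp [ContinuousLinearMap.smul_apply, Complex.real_smul, smul_eq_mul]
    push_cast
    field_simp
    ring


lemma wirtP_radial (z : ℂ) (hz0 : z ≠ 0) (hs dd : ℝ) :
    (((hs:ℂ) + z * dd * (z.re / ‖z‖) ) -
      Complex.I * (Complex.I * hs + z * dd * (z.im / ‖z‖))) / 2
      = ((hs + ‖z‖ * dd / 2 : ℝ) : ℂ) := by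
  have hzn : (0:ℝ) < ‖z‖ := norm_pos_iff.2 hz0
  have hzA : (0:ℝ) < ‖z‖ := hzn
  have hs2 : z.re ^ 2 + z.im ^ 2 = ‖z‖ ^ 2 := by
    rw [Complex.sq_norm, Complex.normSq_apply]; ring
  have hinv : ‖z‖ * (‖z‖)⁻¹ = 1 := mul_inv_cancel₀ hzA.ne'
  apply Complex.ext
  · simp [Complex.div_re, Complex.div_im, Complex.normSq_apply, Complex.add_re, Complex.add_im,
      Complex.mul_re, Complex.mul_im, Complex.ofReal_re, Complex.ofReal_im]
    field_simp
    linear_combination dd * hs2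
  · simp [Complex.div_re, Complex.div_im, Complex.normSq_apply, Complex.add_re, Complex.add_im,
      Complex.mul_re, Complex.mul_im, Complex.ofReal_re, Complex.ofReal_im]
    ring

lemma wirtM_radial (z : ℂ) (hz0 : z ≠ 0) (hs dd : ℝ) :
    (((hs:ℂ) + z * dd * (z.re / ‖z‖) ) +
      Complex.I * (Complex.I * hs + z * dd * (z.im / ‖z‖))) / 2
      = z^2 * ((dd / (2 * ‖z‖) : ℝ) : ℂ) := by
  have hzn : (0:ℝ) < ‖z‖ := norm_pos_iff.2 hz0
  have hzA : (0:ℝ) < ‖z‖ := hzn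
  apply Complex.ext
  · simp [Complex.div_re, Complex.div_im, Complex.normSq_apply, Complex.add_re, Complex.add_im,
      Complex.mul_re, Complex.mul_im, Complex.ofReal_re, Complex.ofReal_im, pow_two]
    field_simp
    ring
  · simp [Complex.div_re, Complex.div_im, Complex.normSq_apply, Complex.add_re, Complex.add_im,
      Complex.mul_re, Complex.mul_im, Complex.ofReal_re, Complex.ofReal_im, pow_two]
    field_simp

theorem fmap_innerDil
    (α : ℝ) (hα₁ : 1 < α) (hα₂ : α < 2)
    (z : ℂ) (hz : z ∈ Metric.ball (0:ℂ) 1) (hz0 : z ≠ 0) :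
    innerDil α (fmap α) z = ENNReal.ofReal (Real.log (Real.exp 1 / ‖z‖)) := by
  have ha : (0:ℝ) < α - 1 := by linarith
  have ha2 : α - 2 < 0 := by linarith
  have hne2 : α - 2 ≠ 0 := by linarith
  set s : ℝ := ‖z‖ with hsdef
  have h0 : 0 < s := norm_pos_iff.2 hz0
  have h1 : s < 1 := by simpa [hsdef] using mem_ball_zero_iff.1 hz
  have hse : s < Real.exp 1 := lt_of_lt_of_le h1 (by nlinarith [Real.exp_one_gt_d9])
  set q : ℝ := Real.log (Real.exp 1 / s) with hqdef
  have hq1 : (1:ℝ) ≤ q := logq_ge_one h0 h1.le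
  have hq0 : (0:ℝ) < q := by linarith
  set A : ℝ := 1 + ((2 - α) / (α - 1)) * ∫ t in s..1, kern α t with hAdef
  have hA1 : (1:ℝ) ≤ A := A_pos hα₁ hα₂ h0 h1.le
  have hA0 : (0:ℝ) < A := lt_of_lt_of_le one_pos hA1
  set k : ℝ := kern α s with hkdef
  have hk0 : (0:ℝ) < k := kern_pos hα₁ h0 hse
  set B : ℝ := A ^ ((1:ℝ)/(α-2)) with hBdef
  have hB0 : (0:ℝ) < B := Real.rpow_pos_of_pos hA0 _
  set ρd : ℝ := B * k with hρdd
  have hρd0 : (0:ℝ) < ρd := mul_pos hB0 hk0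
  have hρ : HasDerivAt (rho α) ρd s := rho_hasDerivAt hα₁ hα₂ h0 h1.le
  set ρ : ℝ := rho α s with hρdef
  have hρval : ρ = A ^ ((α-1)/(α-2)) := by rw [hρdef, rho, ← hAdef]
  have hρ0 : (0:ℝ) < ρ := by rw [hρval]; exact Real.rpow_pos_of_pos hA0 _
  have hρBA : ρ = B * A := by
    rw [hρval, hBdef]
    rw [show (α-1)/(α-2) = (1:ℝ)/(α-2) + 1 from by field_simp; ring]
    rw [Real.rpow_add hA0, Real.rpow_one]
  -- key inequality : s * ρd ≤ ρ
  have hkey : s * ρd ≤ ρ := by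
    have h' : s * k ≤ A := key_ineq hα₁ hα₂ h0 h1.le
    calc s * ρd = B * (s * k) := by rw [hρdd]; ring
    _ ≤ B * A := mul_le_mul_of_nonneg_left h' hB0.le
    _ = ρ := hρBA.symm
  -- derivative of the radial profile divided by r
  have hd : HasDerivAt (fun r => rho α r / r) ((ρd * s - ρ * 1) / s ^ 2) s :=
    hρ.div (hasDerivAt_id s) h0.ne'
  obtain ⟨hdiff, hD1, hDI⟩ := radial_fderiv (fun r => rho α r / r) _ z hz0 hd
  set dd : ℝ := (ρd * s - ρ * 1) / s ^ 2 with hdd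
  have hev : fmap α =ᶠ[nhds z] (fun w : ℂ => w * ((rho α ‖w‖ / ‖w‖ : ℝ) : ℂ)) := by
    filter_upwards [IsOpen.mem_nhds isOpen_compl_singleton
      (show z ∈ ({0}ᶜ : Set ℂ) from hz0)] with w hw
    have hw0 : w ≠ 0 := hw
    have hwn : (‖w‖:ℂ) ≠ 0 := by
      exact_mod_cast (norm_pos_iff.2 hw0).ne'
    rw [fmap, if_neg hw0]
    push_cast
    field_simp
  have hfd : fderiv ℝ (fmap α) z = fderiv ℝ (fun w : ℂ => w * ((rho α ‖w‖ / ‖w‖ : ℝ) : ℂ)) z :=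
    hev.fderiv_eq
  have hwPv : wirtP (fmap α) z = ((rho α s / s + s * dd / 2 : ℝ) : ℂ) := by
    simp only [wirtP, hfd, hD1, hDI]
    exact wirtP_radial z hz0 _ _
  have hwMv : wirtM (fmap α) z = z^2 * ((dd / (2*s) : ℝ) : ℂ) := by
    simp only [wirtM, hfd, hD1, hDI]
    exact wirtM_radial z hz0 _ _
  have hPval : rho α s / s + s * dd / 2 = (ρ + s * ρd)/(2*s) := by
    rw [hdd, ← hρdef]; field_simp; ring
  have haP : ‖wirtP (fmap α) z‖ = (ρ + s*ρd)/(2*s) := by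
    rw [hwPv, Complex.norm_real, Real.norm_eq_abs, hPval, abs_of_pos (by positivity)]
  have haM : ‖wirtM (fmap α) z‖ = (ρ - s*ρd)/(2*s) := by
    rw [hwMv, norm_mul, norm_pow, Complex.norm_real, Real.norm_eq_abs, ← hsdef]
    rw [abs_of_nonpos (by
      apply div_nonpos_of_nonpos_of_nonneg _ (by positivity)
      rw [hdd]
      apply div_nonpos_of_nonpos_of_nonneg _ (by positivity)
      nlinarith [hkey])]
    rw [hdd]
    field_simp
    ring
  have hPM : (ρ + s*ρd)/(2*s) - (ρ - s*ρd)/(2*s) = ρd := by field_simp; ring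
  have hJ : ((ρ + s*ρd)/(2*s))^2 - ((ρ - s*ρd)/(2*s))^2 = ρ * ρd / s := by
    field_simp; ring
  have hJne : jacF (fmap α) z ≠ 0 := by
    rw [jacF, haP, haM, hJ]
    positivity
  rw [innerDil, if_pos hJne, haP, haM, hPM, hJ]
  -- final algebra
  set γ : ℝ := 1/(α-1) with hγdef
  have hγ1 : γ * (α - 1) = 1 := by rw [hγdef]; field_simp
  have hkval : k = (s ^ γ * q ^ γ)⁻¹ := by
    rw [hkdef, kern, ← hγdef, ← hqdef, one_div]
  have hsq0 : (0:ℝ) < s ^ γ * q ^ γ :=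
    mul_pos (Real.rpow_pos_of_pos h0 _) (Real.rpow_pos_of_pos hq0 _)
  have hk1a : k ^ ((1:ℝ) - α) = s * q := by
    have e1 : k ^ ((1:ℝ) - α) = (s ^ γ * q ^ γ) ^ (α - 1) := by
      rw [hkval, ← Real.rpow_neg_one (s ^ γ * q ^ γ), ← Real.rpow_mul hsq0.le]
      congr 1; ring
    rw [e1, Real.mul_rpow (Real.rpow_pos_of_pos h0 _).le (Real.rpow_pos_of_pos hq0 _).le,
      ← Real.rpow_mul h0.le, ← Real.rpow_mul hq0.le, hγ1, Real.rpow_one, Real.rpow_one]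
  have hkk : k = k ^ α * (s * q) := by
    rw [← hk1a, ← Real.rpow_add hk0]
    norm_num
  have hBB : B * B = B ^ α * B ^ (2 - α) := by
    rw [← Real.rpow_add hB0]
    rw [show α + (2 - α) = ((2:ℕ):ℝ) from by norm_num]
    rw [Real.rpow_natCast]; ring
  have hBinv : B ^ (2 - α) = A⁻¹ := by
    rw [hBdef, ← Real.rpow_mul hA0.le,
      show 1/(α-2) * (2 - α) = (-1:ℝ) from by field_simp; ring,
      Real.rpow_neg_one]
  have hnum : ρ * ρd = B ^ α * k ^ α * (s * q) := by
    calc ρ * ρd = (B * B) * (A * k) := by rw [hρBA, hρdd]; ring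
    _ = (B ^ α * B ^ (2-α)) * (A * (k ^ α * (s * q))) := by rw [← hBB, ← hkk]
    _ = B ^ α * k ^ α * (s * q) * (B ^ (2-α) * A) := by ring
    _ = B ^ α * k ^ α * (s * q) := by rw [hBinv, inv_mul_cancel₀ hA0.ne', mul_one]
  have hBα0 : (0:ℝ) < B ^ α := Real.rpow_pos_of_pos hB0 _
  have hkα0 : (0:ℝ) < k ^ α := Real.rpow_pos_of_pos hk0 _
  have main : ρ * ρd / s / ρd ^ α = q := by
    rw [div_div, hnum, hρdd, Real.mul_rpow hB0.le hk0.le,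
      div_eq_iff (by positivity : (0:ℝ) < s * (B ^ α * k ^ α)).ne']
    ring
  rw [main]
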